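/- Let x be an infinite word over Σ in which every letter occurs with bounded gaps, and let φ : Σ → Δ ∪ {ε} be a morphism mapping each letter to a word of length at most 1, such that φ(x) is infinite. Then for every y in the abelian closure of x, the word φ(y) is infinite and belongs to the abelian closure of φ(x). -/

import Mathlib

/-- `u` is a factor of the infinite word `x`. -/
def Factor {A : Type*} (x : ℕ → A) (u : List A) : Prop :=
  ∃ i, u = (List.range u.length).map fun k => x (i + k)

/-- Abelian equivalence of finite words. -/
def AbEq {A : Type*} [DecidableEq A] (u v : List A) : Prop :=
  ∀ a, u.count a = v.count a

/-- `y` is in the abelian closure of `x`. -/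
def InAbClosure {A : Type*} [DecidableEq A] (x y : ℕ → A) : Prop :=
  ∀ u, Factor y u → ∃ v, Factor x v ∧ AbEq u v

/-- The image of a finite word under a morphism `φ : A → List B`. -/
def wordMap {A B : Type*} (φ : A → List B) (u : List A) : List B :=
  (u.map φ).flatten

/-- The length-`m` prefix of the infinite word `x`. -/
def pref {A : Type*} (x : ℕ → A) (m : ℕ) : List A :=
  (List.range m).map x

/-- `z` is the (infinite) image of the infinite word `x` under the morphism `φ`:
every prefix of `z` is the image of some prefix of `x`. -/
def WordImage {A B : Type*} (φ : A → List B) (x : ℕ → A) (z : ℕ → B) : Prop :=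
  ∀ n : ℕ, ∃ m : ℕ, wordMap φ (pref x m) = pref z n

/-- The image under `φ` of the length-`m` prefix of `y`. -/
def fim {A B : Type*} (φ : A → List B) (y : ℕ → A) (m : ℕ) : List B :=
  wordMap φ (pref y m)

section Aux

variable {A B : Type*}

theorem pref_add (z : ℕ → A) (i l : ℕ) :
    pref z (i + l) = pref z i ++ (List.range l).map (fun k => z (i + k)) := by
  unfold pref
  rw [List.range_add, List.map_append, List.map_map]
  rfl

theorem pref_length (z : ℕ → A) (m : ℕ) : (pref z m).length = m := by
  simp [pref]

theorem pref_prefix (z : ℕ → A) {m m' : ℕ} (h : m ≤ m') : pref z m <+: pref z m' := by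
  obtain ⟨l, rfl⟩ := Nat.exists_eq_add_of_le h
  rw [pref_add]
  exact List.prefix_append _ _

theorem wordMap_append (φ : A → List B) (u v : List A) :
    wordMap φ (u ++ v) = wordMap φ u ++ wordMap φ v := by
  simp [wordMap]

theorem fim_add (φ : A → List B) (y : ℕ → A) (m l : ℕ) :
    fim φ y (m + l) = fim φ y m ++ wordMap φ ((List.range l).map fun k => y (m + k)) := by
  unfold fim
  rw [pref_add, wordMap_append]

theorem fim_mono (φ : A → List B) (y : ℕ → A) {m m' : ℕ} (h : m ≤ m') :
    fim φ y m <+: fim φ y m' := by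
  obtain ⟨l, rfl⟩ := Nat.exists_eq_add_of_le h
  rw [fim_add]
  exact List.prefix_append _ _

theorem fim_zero (φ : A → List B) (y : ℕ → A) : fim φ y 0 = [] := by
  simp [fim, pref, wordMap]

theorem fim_succ_le (φ : A → List B) (hφ : ∀ a, (φ a).length ≤ 1) (y : ℕ → A) (m : ℕ) :
    (fim φ y (m + 1)).length ≤ (fim φ y m).length + 1 := by
  rw [fim_add, List.length_append]
  have : (wordMap φ ((List.range 1).map fun k => y (m + k))).length ≤ 1 := by
    simp [wordMap]
    exact hφ _
  omega

theorem factor_iff (z : ℕ → A) (u : List A) :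
    Factor z u ↔ ∃ i, pref z (i + u.length) = pref z i ++ u := by
  constructor
  · rintro ⟨i, hu⟩
    exact ⟨i, by rw [pref_add, ← hu]⟩
  · rintro ⟨i, hi⟩
    rw [pref_add] at hi
    exact ⟨i, (List.append_cancel_left hi).symm⟩

theorem getD_agree {l1 l2 : List B} (d : B) (h : l1 <+: l2) {k : ℕ} (hk : k < l1.length) :
    l1.getD k d = l2.getD k d := by
  rw [List.getD_eq_getElem l1 d hk, List.getD_eq_getElem l2 d (hk.trans_le h.length_le)]
  exact h.getElem hk

theorem nat_ivt (L : ℕ → ℕ) (h0 : L 0 = 0) (hstep : ∀ m, L (m + 1) ≤ L m + 1)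
    (hub : ∀ n, ∃ m, n ≤ L m) : ∀ n, ∃ m, L m = n := by
  intro n
  have hex : ∃ m, n ≤ L m := hub n
  cases hm0 : Nat.find hex with
  | zero =>
      have h1 := Nat.find_spec hex
      rw [hm0] at h1
      exact ⟨0, by omega⟩
  | succ k =>
      have h1 : n ≤ L (k + 1) := by have := Nat.find_spec hex; rwa [hm0] at this
      have h2 : ¬ n ≤ L k := Nat.find_min hex (by omega)
      exact ⟨k + 1, by have := hstep k; omega⟩

end Aux

theorem abClosure_morphism_image {A B : Type*} [DecidableEq A] [DecidableEq B]
    (x : ℕ → A) (φ : A → List B)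
    (hgaps : ∀ a : A, (∃ i, x i = a) → ∃ N, ∀ i, ∃ j, i ≤ j ∧ j < i + N ∧ x j = a)
    (hφ : ∀ a, (φ a).length ≤ 1)
    (xz : ℕ → B) (hxz : WordImage φ x xz) :
    ∀ y, InAbClosure x y →
      ∃ yz : ℕ → B, WordImage φ y yz ∧ InAbClosure xz yz := by
  classical
  intro y hy
  -- x-side: every `fim φ x m` is literally a prefix of `xz`.
  have fxpref : ∀ m, fim φ x m = pref xz (fim φ x m).length := by
    intro m
    obtain ⟨m', hm'⟩ := hxz (fim φ x m).length
    have hm'' : fim φ x m' = pref xz (fim φ x m).length := hm'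
    have hlen : (fim φ x m').length = (fim φ x m).length := by rw [hm'', pref_length]
    rcases le_total m m' with h | h
    · have := (fim_mono φ x h).eq_of_length hlen.symm
      exact this.trans hm''
    · have := (fim_mono φ x h).eq_of_length hlen
      exact this.symm.trans hm''
  -- there is a letter occurring in x with nonempty image
  have hj : ∃ j, φ (x j) ≠ [] := by
    by_contra h
    push_neg at h
    obtain ⟨m1, hm1⟩ := hxz 1
    have hlen1 : (wordMap φ (pref x m1)).length = 1 := by rw [hm1, pref_length]
    have hnil : wordMap φ (pref x m1) = [] := by
      show ((pref x m1).map φ).flatten = []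
      apply List.flatten_eq_nil_iff.mpr
      intro l hl
      simp [pref] at hl
      obtain ⟨k, _, rfl⟩ := hl
      exact h _
    rw [hnil] at hlen1
    simp at hlen1
  obtain ⟨j, hjne⟩ := hj
  obtain ⟨N, hN⟩ := hgaps (x j) ⟨j, rfl⟩
  -- every length-N segment of y contains the letter x j
  have hyfac : ∀ i, x j ∈ (List.range N).map (fun k => y (i + k)) := by
    intro i
    have hf : Factor y ((List.range N).map fun k => y (i + k)) := ⟨i, by simp⟩
    obtain ⟨v, hv, hab⟩ := hy _ hf
    have hperm := List.perm_iff_count.mpr hab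
    have hlenv : v.length = N := by rw [← hperm.length_eq]; simp
    obtain ⟨p, hp⟩ := hv
    obtain ⟨q, hq1, hq2, hq3⟩ := hN p
    have hav : x j ∈ v := by
      rw [hp]
      refine List.mem_map.mpr ⟨q - p, ?_, ?_⟩
      · rw [List.mem_range, hlenv]; omega
      · show x (p + (q - p)) = x j
        rw [Nat.add_sub_cancel' hq1]
        exact hq3
    have hcount : 0 < List.count (x j) ((List.range N).map fun k => y (i + k)) := by
      rw [hab (x j)]
      exact List.count_pos_iff.mpr hav
    exact List.count_pos_iff.mp hcount
  -- lengths of fim φ y grow unboundedly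
  have hstep : ∀ i, (fim φ y i).length + 1 ≤ (fim φ y (i + N)).length := by
    intro i
    rw [fim_add, List.length_append]
    have ha : x j ∈ (List.range N).map fun k => y (i + k) := hyfac i
    have hsub := List.sublist_flatten_of_mem (List.mem_map_of_mem (f := φ) ha)
    have h1 := hsub.length_le
    have h2 : 0 < (φ (x j)).length := List.length_pos_iff.mpr hjne
    have h3 : (wordMap φ ((List.range N).map fun k => y (i + k))).length
        = ((((List.range N).map fun k => y (i + k)).map φ).flatten).length := rfl
    omega
  have hub : ∀ n, ∃ m, n ≤ (fim φ y m).length := by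
    intro n
    induction n with
    | zero => exact ⟨0, Nat.zero_le _⟩
    | succ k ih =>
        obtain ⟨m, hm⟩ := ih
        exact ⟨m + N, by have := hstep m; omega⟩
  have hex : ∀ n, ∃ m, (fim φ y m).length = n :=
    nat_ivt _ (by rw [fim_zero]; rfl) (fun m => fim_succ_le φ hφ y m) hub
  choose g hg using hex
  -- the limit word
  set yz : ℕ → B := fun n => (fim φ y (g (n + 1))).getD n (xz 0) with hyz
  have comp : ∀ m m' k, k < (fim φ y m).length → k < (fim φ y m').length →
      (fim φ y m).getD k (xz 0) = (fim φ y m').getD k (xz 0) := by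
    intro m m' k h1 h2
    rcases le_total m m' with h | h
    · exact getD_agree _ (fim_mono φ y h) h1
    · exact (getD_agree _ (fim_mono φ y h) h2).symm
  have key : ∀ m, fim φ y m = pref yz ((fim φ y m).length) := by
    intro m
    apply List.ext_getElem (by rw [pref_length])
    intro k h1 h2
    have hk2 : k < (fim φ y (g (k + 1))).length := by rw [hg]; omega
    calc (fim φ y m)[k] = (fim φ y m).getD k (xz 0) := (List.getD_eq_getElem _ _ h1).symm
      _ = (fim φ y (g (k + 1))).getD k (xz 0) := comp _ _ _ h1 hk2
      _ = yz k := rfl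
      _ = (pref yz ((fim φ y m).length))[k] := by simp [pref]
  have keyg : ∀ n, fim φ y (g n) = pref yz n := by
    intro n
    exact (key (g n)).trans (by rw [hg n])
  refine ⟨yz, ?_, ?_⟩
  · -- WordImage
    intro n
    exact ⟨g n, keyg n⟩
  · -- InAbClosure
    intro u hu
    rcases Nat.eq_zero_or_pos u.length with h0 | hpos
    · have hu0 : u = [] := List.length_eq_zero_iff.mp h0
      subst hu0
      exact ⟨[], ⟨0, by simp⟩, fun a => rfl⟩
    · obtain ⟨i, hi⟩ := (factor_iff yz u).mp hu
      have hle : g i ≤ g (i + u.length) := by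
        by_contra h
        push_neg at h
        have := (fim_mono φ y h.le).length_le
        rw [hg, hg] at this
        omega
      set l := g (i + u.length) - g i with hl
      set w : List A := (List.range l).map fun k => y (g i + k) with hw
      have hsplit : fim φ y (g (i + u.length)) = fim φ y (g i) ++ wordMap φ w := by
        have h1 : g (i + u.length) = g i + l := by omega
        rw [h1, fim_add]
      have hwu : wordMap φ w = u := by
        have h2 : fim φ y (g i) ++ wordMap φ w = fim φ y (g i) ++ u := by
          rw [← hsplit, keyg, hi, keyg i]
        exact List.append_cancel_left h2
      have hwfac : Factor y w := ⟨g i, by simp [hw]⟩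
      obtain ⟨v', hv', hab⟩ := hy w hwfac
      refine ⟨wordMap φ v', ?_, ?_⟩
      · -- wordMap φ v' is a factor of xz
        obtain ⟨p, hp⟩ := (factor_iff x v').mp hv'
        apply (factor_iff xz _).mpr
        refine ⟨(fim φ x p).length, ?_⟩
        have e1 : fim φ x (p + v'.length) = fim φ x p ++ wordMap φ v' := by
          show wordMap φ (pref x (p + v'.length)) = wordMap φ (pref x p) ++ wordMap φ v'
          rw [hp, wordMap_append]
        have hlen2 : (fim φ x (p + v'.length)).length
            = (fim φ x p).length + (wordMap φ v').length := by
          rw [e1, List.length_append]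
        calc pref xz ((fim φ x p).length + (wordMap φ v').length)
            = pref xz (fim φ x (p + v'.length)).length := by rw [hlen2]
          _ = fim φ x (p + v'.length) := (fxpref _).symm
          _ = fim φ x p ++ wordMap φ v' := e1
          _ = pref xz (fim φ x p).length ++ wordMap φ v' := by
              conv_lhs => rw [fxpref p]
      · -- abelian equivalence
        intro b
        rw [← hwu]
        have hperm : w.Perm v' := List.perm_iff_count.mpr hab
        have hperm2 : (wordMap φ w).Perm (wordMap φ v') := (hperm.map φ).flatten
        exact hperm2.count_eq b
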